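/- If a finite set of CQs B is a basis of most-general fitting CQs for a collection of labeled examples E and B is subset-minimal among such bases, then every element of B is a weakly most-general fitting CQ for E. -/

import Mathlib

/-! ## Basic setting: schemas, instances, homomorphisms, conjunctive queries -/

/-- A schema: a type of relation symbols, each with an associated arity. -/
structure Schema where
  Rel : Type
  arity : Rel → ℕ

/-- A fact over a schema `S`: a relation symbol of `S` applied to a tuple of values
(values are natural numbers) whose length is the arity of the symbol. -/
structure DBFact (S : Schema) where
  rel : S.Rel
  args : List ℕ
  arity_eq : args.length = S.arity rel

/-- A database instance over `S`: a finite set of facts. -/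
structure Instance (S : Schema) where
  facts : Set (DBFact S)
  finite : facts.Finite

/-- The active domain of an instance: all values occurring in its facts. -/
def Instance.adom {S : Schema} (I : Instance S) : Set ℕ :=
  { v | ∃ f ∈ I.facts, v ∈ f.args }

/-- The image of a fact under a map on values. -/
def DBFact.map {S : Schema} (h : ℕ → ℕ) (f : DBFact S) : DBFact S :=
  ⟨f.rel, f.args.map h, by simpa using f.arity_eq⟩

/-- `h` is a homomorphism from `I` to `J`: the image of every fact of `I` is a fact of `J`. -/
def IsHom {S : Schema} (I J : Instance S) (h : ℕ → ℕ) : Prop :=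
  ∀ f ∈ I.facts, f.map h ∈ J.facts

/-- A pointed instance: an instance together with a distinguished `k`-tuple of values. -/
abbrev PInst (S : Schema) (k : ℕ) := Instance S × (Fin k → ℕ)

/-- A pointed instance is a (valid) data example if its distinguished tuple lies in the
active domain. -/
def IsExample {S : Schema} {k : ℕ} (e : PInst S k) : Prop :=
  ∀ i, e.2 i ∈ e.1.adom

/-- `(I,a) → (J,b)`: there is a homomorphism from `I` to `J` mapping `a` to `b`. -/
def PHom {S : Schema} {k : ℕ} (e e' : PInst S k) : Prop :=
  ∃ h : ℕ → ℕ, IsHom e.1 e'.1 h ∧ ∀ i, h (e.2 i) = e'.2 i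

/-- A `k`-ary conjunctive query over `S`: a finite set of atoms (facts over variables,
where variables are natural numbers) together with a `k`-tuple of answer variables. -/
structure CQ (S : Schema) (k : ℕ) where
  atoms : Set (DBFact S)
  finite : atoms.Finite
  ans : Fin k → ℕ

/-- `q(I)`: the set of `k`-tuples `a` over the active domain of `I` such that some
assignment of the variables of `q` into `I` maps every atom to a fact of `I`
and the answer variables to `a`. -/
def CQ.eval {S : Schema} {k : ℕ} (q : CQ S k) (I : Instance S) : Set (Fin k → ℕ) :=
  { a | (∀ i, a i ∈ I.adom) ∧
        ∃ h : ℕ → ℕ, (∀ f ∈ q.atoms, f.map h ∈ I.facts) ∧ ∀ i, h (q.ans i) = a i }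

/-- Containment `q₁ ⊆ q₂` : `q₁(I) ⊆ q₂(I)` for all instances `I`. -/
def CQ.contained {S : Schema} {k : ℕ} (q₁ q₂ : CQ S k) : Prop :=
  ∀ I : Instance S, q₁.eval I ⊆ q₂.eval I

/-- Equivalence of CQs: mutual containment. -/
def CQ.equiv {S : Schema} {k : ℕ} (q₁ q₂ : CQ S k) : Prop :=
  q₁.contained q₂ ∧ q₂.contained q₁

/-- A collection of labeled examples `E = (E⁺, E⁻)`. -/
structure LabeledExamples (S : Schema) (k : ℕ) where
  pos : Set (PInst S k)
  neg : Set (PInst S k)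

/-- `q` fits `E`: every element of `E⁺` is a positive example for `q` and every element
of `E⁻` is a negative example for `q`. -/
def CQ.fits {S : Schema} {k : ℕ} (q : CQ S k) (E : LabeledExamples S k) : Prop :=
  (∀ e ∈ E.pos, e.2 ∈ q.eval e.1) ∧ (∀ e ∈ E.neg, e.2 ∉ q.eval e.1)

/-! ## Extremal fitting CQs -/

/-- `q` is a most-specific fitting CQ for `E`. -/
def IsMostSpecificFit {S : Schema} {k : ℕ} (q : CQ S k) (E : LabeledExamples S k) : Prop :=
  q.fits E ∧ ∀ q' : CQ S k, q'.fits E → q.contained q'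

/-- `q` is a strongly most-general fitting CQ for `E`. -/
def IsStronglyMostGeneralFit {S : Schema} {k : ℕ} (q : CQ S k) (E : LabeledExamples S k) : Prop :=
  q.fits E ∧ ∀ q' : CQ S k, q'.fits E → q'.contained q

/-- `q` is a weakly most-general fitting CQ for `E`. -/
def IsWeaklyMostGeneralFit {S : Schema} {k : ℕ} (q : CQ S k) (E : LabeledExamples S k) : Prop :=
  q.fits E ∧ ∀ q' : CQ S k, q'.fits E → q.contained q' → q.equiv q'

/-- `B` is a (finite) basis of most-general fitting CQs for `E`. -/
def IsBasisOfMostGeneralFits {S : Schema} {k : ℕ} (B : Set (CQ S k))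
    (E : LabeledExamples S k) : Prop :=
  B.Finite ∧ (∀ q ∈ B, q.fits E) ∧ ∀ q' : CQ S k, q'.fits E → ∃ q ∈ B, q'.contained q

/-! ## Canonical examples and relativized homomorphism dualities -/

/-- The canonical example `e_q` of a CQ `q`: its atoms as facts, pointed at the
answer variables. -/
def CQ.canonEx {S : Schema} {k : ℕ} (q : CQ S k) : PInst S k :=
  (⟨q.atoms, q.finite⟩, q.ans)

/-- The canonical CQ of a pointed instance. -/
def canonCQ {S : Schema} {k : ℕ} (e : PInst S k) : CQ S k :=
  ⟨e.1.facts, e.1.finite, e.2⟩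

/-- `(F, D)` is a homomorphism duality relative to the pointed instance `e`:
for every data example `e'` that maps homomorphically into `e`,
some element of `F` maps homomorphically into `e'` iff `e'` maps homomorphically
into no element of `D`. -/
def IsHomDualityRel {S : Schema} {k : ℕ} (e : PInst S k) (F D : Set (PInst S k)) : Prop :=
  ∀ e' : PInst S k, IsExample e' → PHom e' e →
    ((∃ f ∈ F, PHom f e') ↔ ∀ d ∈ D, ¬ PHom e' d)

/-! ## Direct products -/

/-- The product of two facts with the same relation symbol, pairing values positionally
via the pairing function `Nat.pair`. -/
def DBFact.prod {S : Schema} (f g : DBFact S) (h : f.rel = g.rel) : DBFact S :=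
  ⟨f.rel, List.zipWith Nat.pair f.args g.args, by
    rw [List.length_zipWith, f.arity_eq, g.arity_eq, h, min_self]⟩

/-- The direct product of two instances: all facts `R(⟨a₁,b₁⟩, …, ⟨aₙ,bₙ⟩)` with
`R(a₁,…,aₙ)` a fact of `I` and `R(b₁,…,bₙ)` a fact of `J`. -/
def Instance.prod {S : Schema} (I J : Instance S) : Instance S where
  facts := { f | ∃ g ∈ I.facts, ∃ g' ∈ J.facts, ∃ h : g.rel = g'.rel, f = DBFact.prod g g' h }
  finite := by
    classical
    apply Set.Finite.subset (((I.finite.prod J.finite).image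
      (fun p : DBFact S × DBFact S =>
        if h : p.1.rel = p.2.rel then DBFact.prod p.1 p.2 h else p.1)))
    rintro f ⟨g, hg, g', hg', h, rfl⟩
    exact ⟨(g, g'), ⟨hg, hg'⟩, dif_pos h⟩

/-- The direct product of two pointed instances. -/
def PInst.prod {S : Schema} {k : ℕ} (e e' : PInst S k) : PInst S k :=
  (e.1.prod e'.1, fun i => Nat.pair (e.2 i) (e'.2 i))

/-! ## Path instances and path examples -/

/-- `I` is a path instance with chain values `a 0, …, a n` and chain relations
`R 1, …, R n`: its facts are the binary chain facts `R i (a (i-1), a i)` together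
with unary facts on values `a j` with `j ≥ 1`. -/
def IsPathInstanceOn {S : Schema} (I : Instance S) (n : ℕ) (a : ℕ → ℕ) (R : ℕ → S.Rel) : Prop :=
  Set.InjOn a (Set.Iic n) ∧
  (∀ i, 1 ≤ i → i ≤ n → ∃ f ∈ I.facts, f.rel = R i ∧ f.args = [a (i - 1), a i]) ∧
  (∀ f ∈ I.facts,
      (∃ i, 1 ≤ i ∧ i ≤ n ∧ f.rel = R i ∧ f.args = [a (i - 1), a i]) ∨
      (∃ j, 1 ≤ j ∧ j ≤ n ∧ f.args = [a j]))

/-- A path example: a unary pointed instance whose instance is a path instance and whose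
distinguished value is the first value of the path. -/
def IsPathExample {S : Schema} (e : PInst S 1) : Prop :=
  ∃ (n : ℕ) (a : ℕ → ℕ) (R : ℕ → S.Rel), IsPathInstanceOn e.1 n a R ∧ e.2 0 = a 0

/-- If `B` is a basis of most-general fitting CQs for `E` that is
subset-minimal among such bases, then every element of `B` is a weakly most-general
fitting CQ for `E`. -/
theorem minimal_basis_elements_weakly_most_general
    {S : Schema} {k : ℕ} (B : Set (CQ S k)) (E : LabeledExamples S k)
    (hB : IsBasisOfMostGeneralFits B E)
    (hmin : ∀ B' ⊆ B, IsBasisOfMostGeneralFits B' E → B' = B) :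
    ∀ q ∈ B, IsWeaklyMostGeneralFit q E := by
  intro q hq
  obtain ⟨hfin, hfits, hbasis⟩ := hB
  refine ⟨hfits q hq, fun q' hq' hqq' => ?_⟩
  obtain ⟨q'', hq''B, hq'q''⟩ := hbasis q' hq'
  by_cases hcase : q'' = q
  · exact ⟨hqq', hcase ▸ hq'q''⟩
  · exfalso
    have : B \ {q} = B := by
      apply hmin _ Set.diff_subset
      refine ⟨hfin.diff, fun p hp => hfits p hp.1, fun p hp => ?_⟩
      obtain ⟨b, hbB, hpb⟩ := hbasis p hp
      by_cases hb : b = q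
      · exact ⟨q'', ⟨hq''B, hcase⟩, fun I => Set.Subset.trans (hpb I)
          (Set.Subset.trans ((hb ▸ hqq') I) (hq'q'' I))⟩
      · exact ⟨b, ⟨hbB, hb⟩, hpb⟩
    have := this ▸ hq
    exact this.2 rfl
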